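/- Let N ≥ 2 and work in the multivariate polynomial ring over ℂ in the commuting indeterminates R₁, …, R_N, T₂, …, T_{N−1}, u₁, …, u_{N−1}. Let M be the 2(N−1) × 2(N−1) matrix whose rows and columns are indexed by the list (1⁻, 1⁺, 2⁻, 2⁺, …, (N−1)⁻, (N−1)⁺), with every diagonal entry equal to −1, and whose only other nonzero entries are: in row j⁻, the entry R_{j+1} u_j in column j⁺ and (if j ≤ N−2) the entry T_{j+1} u_{j+1} in column (j+1)⁻; and in row j⁺, the entry R_j u_j in column j⁻ and (if j ≥ 2) the entry T_j u_{j−1} in column (j−1)⁺. Then the coefficient of the constant monomial in det M equals 1, and every non-constant monomial occurring in det M has positive degree in at least one of the variables R₁, …, R_N and positive degree in at least one of the variables u₁, …, u_{N−1}. -/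
import Mathlib


open MvPolynomial

/-- Variables of the polynomial ring: `Sum.inl i` is `R_{i+1}` (0-based), `Sum.inr (Sum.inl i)`
is `T_{i+1}` (0-based), and `Sum.inr (Sum.inr i)` is `u_{i+1}` (0-based). -/
abbrev SVar (N : ℕ) := Fin N ⊕ (Fin N ⊕ Fin (N - 1))

/-- The variable `R_i` (1-based index `i`), or `0` if out of range. -/
noncomputable def vR (N : ℕ) (i : ℕ) : MvPolynomial (SVar N) ℂ :=
  if hi : i - 1 < N ∧ 1 ≤ i then X (Sum.inl ⟨i - 1, hi.1⟩) else 0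

/-- The variable `T_i` (1-based index `i`), or `0` if out of range. -/
noncomputable def vT (N : ℕ) (i : ℕ) : MvPolynomial (SVar N) ℂ :=
  if hi : i - 1 < N ∧ 1 ≤ i then X (Sum.inr (Sum.inl ⟨i - 1, hi.1⟩)) else 0

/-- The variable `u_i` (1-based index `i`), or `0` if out of range. -/
noncomputable def vu (N : ℕ) (i : ℕ) : MvPolynomial (SVar N) ℂ :=
  if hi : i - 1 < N - 1 ∧ 1 ≤ i then X (Sum.inr (Sum.inr ⟨i - 1, hi.1⟩)) else 0

/-- The secular matrix: rows and columns are indexed by `Fin (N-1) × Bool`, where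
`(j, false)` is the row/column `(j+1)⁻` and `(j, true)` is `(j+1)⁺` (in 1-based paper
notation `j⁻`, `j⁺` for `j = 1, …, N-1`).  The diagonal entry at position `r` is the
constant `σ r`; in row `j⁻` the only other nonzero entries are `R_{j+1} u_j` in column `j⁺`
and (for `j ≤ N-2`) `T_{j+1} u_{j+1}` in column `(j+1)⁻`; in row `j⁺` they are `R_j u_j`
in column `j⁻` and (for `j ≥ 2`) `T_j u_{j-1}` in column `(j-1)⁺`. -/
noncomputable def secMatrix (N : ℕ) (σ : Fin (N - 1) × Bool → ℂ) :
    Matrix (Fin (N - 1) × Bool) (Fin (N - 1) × Bool) (MvPolynomial (SVar N) ℂ) :=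
  Matrix.of fun r c =>
    if r = c then C (σ r)
    else if r.2 = false ∧ c.2 = true ∧ c.1 = r.1 then
      vR N (r.1.1 + 2) * vu N (r.1.1 + 1)
    else if r.2 = false ∧ c.2 = false ∧ c.1.1 = r.1.1 + 1 then
      vT N (r.1.1 + 2) * vu N (r.1.1 + 2)
    else if r.2 = true ∧ c.2 = false ∧ c.1 = r.1 then
      vR N (r.1.1 + 1) * vu N (r.1.1 + 1)
    else if r.2 = true ∧ c.2 = true ∧ c.1.1 + 1 = r.1.1 then
      vT N (r.1.1 + 1) * vu N r.1.1
    else 0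



lemma aeval_kill_monomial {σ : Type*} (pred : σ → Prop) [DecidablePred pred]
    (m : σ →₀ ℕ) (c : ℂ) :
    aeval (fun v => if pred v then (0 : MvPolynomial σ ℂ) else X v) (monomial m c) =
      if ∀ v ∈ m.support, ¬ pred v then monomial m c else 0 := by
  rw [aeval_monomial]
  split_ifs with h
  · rw [monomial_eq]
    congr 1
    apply Finsupp.prod_congr
    intro v hv
    rw [if_neg (h v hv)]
  · push_neg at h
    obtain ⟨v, hv, hpv⟩ := h
    rw [Finsupp.prod]
    apply mul_eq_zero_of_right
    apply Finset.prod_eq_zero hv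
    rw [if_pos hpv, zero_pow]
    simpa using hv

lemma coeff_aeval_kill {σ : Type*} [DecidableEq σ] (pred : σ → Prop) [DecidablePred pred]
    (p : MvPolynomial σ ℂ) (m : σ →₀ ℕ) (hm : ∀ v, pred v → m v = 0) :
    coeff m (aeval (fun v => if pred v then (0 : MvPolynomial σ ℂ) else X v) p) = coeff m p := by
  conv_lhs => rw [p.as_sum, map_sum]
  simp_rw [aeval_kill_monomial]
  rw [coeff_sum]
  by_cases hms : m ∈ p.support
  · rw [Finset.sum_eq_single_of_mem m hms]
    · rw [if_pos, coeff_monomial, if_pos rfl]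
      intro v hv hp
      exact absurd (hm v hp) (by simpa using hv)
    · intro b _ hb
      split_ifs with h
      · rw [coeff_monomial, if_neg hb]
      · exact coeff_zero m
  · rw [notMem_support_iff] at hms
    rw [hms]
    apply Finset.sum_eq_zero
    intro b hb
    split_ifs with h
    · rw [coeff_monomial, if_neg]
      rintro rfl
      exact (mem_support_iff.mp hb) hms
    · exact coeff_zero m

lemma det_triangular_weight {n : Type*} {R : Type*} [CommRing R] [Fintype n] [DecidableEq n]
    (M : Matrix n n R) (b : n → ℕ) (hb : Function.Injective b)
    (h : ∀ r c, b c < b r → M r c = 0) : M.det = ∏ i, M i i := by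
  letI := LinearOrder.lift' b hb
  exact Matrix.det_of_upperTriangular (fun i j hij => h i j hij)

def predU (N : ℕ) (v : SVar N) : Prop := ∃ j : Fin (N - 1), v = Sum.inr (Sum.inr j)
def predR (N : ℕ) (v : SVar N) : Prop := ∃ i : Fin N, v = Sum.inl i

instance (N : ℕ) : DecidablePred (predU N) := fun _ => Fintype.decidableExistsFintype
instance (N : ℕ) : DecidablePred (predR N) := fun _ => Fintype.decidableExistsFintype

noncomputable def gU (N : ℕ) : SVar N → MvPolynomial (SVar N) ℂ :=
  fun v => if predU N v then 0 else X v
noncomputable def gR (N : ℕ) : SVar N → MvPolynomial (SVar N) ℂ :=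
  fun v => if predR N v then 0 else X v

lemma aevalU_vu (N i : ℕ) : aeval (gU N) (vu N i) = 0 := by
  unfold vu
  split_ifs with h
  · rw [aeval_X, gU, if_pos ⟨_, rfl⟩]
  · exact map_zero _

lemma aevalR_vR (N i : ℕ) : aeval (gR N) (vR N i) = 0 := by
  unfold vR
  split_ifs with h
  · rw [aeval_X, gR, if_pos ⟨_, rfl⟩]
  · exact map_zero _

lemma aevalR_vT (N i : ℕ) : aeval (gR N) (vT N i) = vT N i := by
  unfold vT
  split_ifs with h
  · rw [aeval_X, gR, if_neg]; rintro ⟨j, hj⟩; exact absurd hj (by simp)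
  · exact map_zero _

lemma aevalR_vu (N i : ℕ) : aeval (gR N) (vu N i) = vu N i := by
  unfold vu
  split_ifs with h
  · rw [aeval_X, gR, if_neg]; rintro ⟨j, hj⟩; exact absurd hj (by simp)
  · exact map_zero _

lemma mapU_secMatrix (N : ℕ) (σ : Fin (N - 1) × Bool → ℂ) :
    (secMatrix N σ).map (aeval (gU N)) = Matrix.diagonal (fun r => C (σ r)) := by
  apply Matrix.ext
  intro r c
  rw [Matrix.map_apply]
  by_cases h : r = c
  · subst h
    rw [Matrix.diagonal_apply_eq]
    show aeval (gU N) (secMatrix N σ r r) = _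
    rw [show secMatrix N σ r r = C (σ r) from if_pos rfl]
    rw [aeval_C, algebraMap_eq]
  · rw [Matrix.diagonal_apply_ne _ h]
    show aeval (gU N) (secMatrix N σ r c) = 0
    unfold secMatrix
    rw [Matrix.of_apply, if_neg h]
    split_ifs <;> first
      | exact map_zero _
      | rw [map_mul, aevalU_vu, mul_zero]

lemma neg_one_prod (N : ℕ) :
    (∏ _i : Fin (N - 1) × Bool, (C (-1 : ℂ) : MvPolynomial (SVar N) ℂ)) = 1 := by
  rw [Finset.prod_const, show (C (-1 : ℂ) : MvPolynomial (SVar N) ℂ) = -1 by simp,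
    Finset.card_univ, Fintype.card_prod, Fintype.card_bool, pow_mul', neg_one_sq, one_pow]

lemma mapU_det (N : ℕ) :
    aeval (gU N) (secMatrix N fun _ => (-1 : ℂ)).det = 1 := by
  rw [(aeval (gU N)).map_det, AlgHom.mapMatrix_apply, mapU_secMatrix, Matrix.det_diagonal]
  exact neg_one_prod N

lemma weight_inj (N : ℕ) : Function.Injective
    (fun p : Fin (N - 1) × Bool => if p.2 then 2 * N - 1 - p.1.1 else p.1.1) := by
  rintro ⟨⟨a, ha⟩, ba⟩ ⟨⟨b, hb⟩, bb⟩ h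
  simp only [Bool.ite_eq_true_distrib] at h
  cases ba <;> cases bb <;>
      simp only [if_true, Bool.false_eq_true, if_false] at h <;>
      simp only [Prod.mk.injEq, Fin.mk.injEq, and_true, and_false, Bool.false_eq_true] <;>
      omega

lemma mapR_det (N : ℕ) :
    aeval (gR N) (secMatrix N fun _ => (-1 : ℂ)).det = 1 := by
  rw [(aeval (gR N)).map_det, AlgHom.mapMatrix_apply]
  set M := (secMatrix N fun _ => (-1 : ℂ)).map (aeval (gR N)) with hM
  have key : ∀ r c : Fin (N - 1) × Bool,
      (if c.2 then 2 * N - 1 - c.1.1 else c.1.1) < (if r.2 then 2 * N - 1 - r.1.1 else r.1.1)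
      → M r c = 0 := by
    intro r c hlt
    have hrc : r ≠ c := by rintro rfl; exact lt_irrefl _ hlt
    have hr1 : r.1.1 < N - 1 := r.1.2
    have hc1 : c.1.1 < N - 1 := c.1.2
    rw [hM, Matrix.map_apply]
    unfold secMatrix
    rw [Matrix.of_apply, if_neg hrc]
    split_ifs with h1 h2 h3 h4
    · rw [map_mul, aevalR_vR, zero_mul]
    · exfalso
      rw [h2.1, h2.2.1] at hlt
      simp only [Bool.false_eq_true, if_false] at hlt
      omega
    · rw [map_mul, aevalR_vR, zero_mul]
    · exfalso
      rw [h4.1, h4.2.1] at hlt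
      simp only [if_true] at hlt
      omega
    · exact map_zero _
  rw [det_triangular_weight M _ (weight_inj N) key]
  have hdiag : ∀ i : Fin (N - 1) × Bool, M i i = C (-1 : ℂ) := by
    intro i
    rw [hM, Matrix.map_apply]
    show aeval (gR N) (secMatrix N _ i i) = _
    rw [show secMatrix N (fun _ => (-1:ℂ)) i i = C (-1:ℂ) from if_pos rfl]
    rw [aeval_C, algebraMap_eq]
  rw [Finset.prod_congr rfl fun i _ => hdiag i]
  exact neg_one_prod N

/-- Lemma: in the secular determinant `det (A_N - I)` (all diagonal entries `-1`), the
constant monomial has coefficient `1`, and every non-constant monomial contains at least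
one reflection variable `R_i` and at least one variable `u_j`. -/
theorem secular_determinant_constant_term_and_reflection (N : ℕ) (hN : 2 ≤ N) :
    MvPolynomial.coeff 0 (secMatrix N fun _ => (-1 : ℂ)).det = 1 ∧
    ∀ m ∈ (secMatrix N fun _ => (-1 : ℂ)).det.support, m ≠ 0 →
      (∃ i : Fin N, 0 < m (Sum.inl i)) ∧ (∃ j : Fin (N - 1), 0 < m (Sum.inr (Sum.inr j))) := by
  set P := (secMatrix N fun _ => (-1 : ℂ)).det with hP
  have hU : ∀ (m : SVar N →₀ ℕ), (∀ v, predU N v → m v = 0) →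
      coeff m P = coeff m (1 : MvPolynomial (SVar N) ℂ) := by
    intro m hm
    rw [← coeff_aeval_kill (predU N) P m hm,
      show (fun v => if predU N v then (0 : MvPolynomial (SVar N) ℂ) else X v) = gU N from rfl,
      hP, mapU_det N]
  have hR : ∀ (m : SVar N →₀ ℕ), (∀ v, predR N v → m v = 0) →
      coeff m P = coeff m (1 : MvPolynomial (SVar N) ℂ) := by
    intro m hm
    rw [← coeff_aeval_kill (predR N) P m hm,
      show (fun v => if predR N v then (0 : MvPolynomial (SVar N) ℂ) else X v) = gR N from rfl,
      hP, mapR_det N]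
  constructor
  · rw [hU 0 (fun _ _ => rfl), coeff_zero_one]
  · intro m hmem hm0
    constructor
    · by_contra hno
      push_neg at hno
      have hm : ∀ v, predR N v → m v = 0 := by
        rintro v ⟨i, rfl⟩
        have := hno i
        omega
      have h1 := hR m hm
      rw [coeff_one, if_neg fun h => hm0 h.symm] at h1
      exact (mem_support_iff.mp hmem) h1
    · by_contra hno
      push_neg at hno
      have hm : ∀ v, predU N v → m v = 0 := by
        rintro v ⟨j, rfl⟩
        have := hno j
        omega
      have h1 := hU m hm
      rw [coeff_one, if_neg fun h => hm0 h.symm] at h1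
      exact (mem_support_iff.mp hmem) h1
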